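/- Let p be an odd prime with p ≠ 3, and let t ∈ ℤ/pℤ satisfy t ∉ {0, 1, 4, 9}, 4t ≠ 1, 9t ≠ 1, and (t(t−1)/p) = ((1−t)/p) = −1. Let y ∈ ℤ/pℤ satisfy y ∉ {0, 1, −1, 2, 4}, 2y ≠ 1, 3y ≠ 1, ty ≠ 4, (2t+1)y ≠ 1, ((1−ty)/p) = ((1−y)/p) = (((4t−1)²y² − 2(4t+1)y + 1)/p) = −1, and ((1−9y)/p) = 1. Define the permutation π₂ʸ of ℤ/2ℤ × ℤ/pℤ by: π₂ʸ(0,0) = (1,t), π₂ʸ(1,0) = (0,1), π₂ʸ(0,1) = (0, y⁻¹), π₂ʸ(1,1) = (0,0), π₂ʸ(0,y) = (1,0), π₂ʸ(1,x) = (1, t·x⁻¹) for x ∉ {0,1}, and π₂ʸ(0,x) = (0, x⁻¹) for x ∉ {0, 1, y}. Then π₂ʸ is AP-destroying. -/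

import Mathlib

/-- A permutation `π` of a finite abelian group `G` is *AP-destroying* if it preserves no
3-term arithmetic progression `(a, a+r, a+2r)` with `r ≠ 0`, i.e. there are no `a, r` with
`r ≠ 0` and `π(a) - 2·π(a+r) + π(a+2r) = 0`. -/
def APDestroying {G : Type*} [AddCommGroup G] (π : Equiv.Perm G) : Prop :=
  ∀ a r : G, r ≠ 0 → π a - 2 • π (a + r) + π (a + 2 • r) ≠ 0

/-- The Legendre symbol `(a / p)` of an element `a : ZMod p`. -/
def legSym (p : ℕ) [Fact p.Prime] (a : ZMod p) : ℤ := legendreSym p a.val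

section
variable {p : ℕ} [Fact p.Prime]

lemma legSym_cast (a : ZMod p) : ((a.val : ℤ) : ZMod p) = a := by
  push_cast
  simp [ZMod.natCast_val, ZMod.cast_id]

lemma ne_zero_of_legSym_neg {d : ZMod p} (h : legSym p d = -1) : d ≠ 0 := by
  intro h0
  rw [legSym, h0] at h
  simp [legendreSym.eq_zero_iff] at h

lemma notSq_of_legSym_neg {d : ZMod p} (h : legSym p d = -1) (z : ZMod p) : z ^ 2 ≠ d := by
  intro hz
  have := (legendreSym.eq_neg_one_iff p (a := (d.val : ℤ))).mp h
  rw [legSym_cast] at this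
  exact this ⟨z, by rw [← hz]; ring⟩

lemma exists_sqrt {d : ZMod p} (h : legSym p d = 1) : ∃ w : ZMod p, w ≠ 0 ∧ w ^ 2 = d := by
  have hd : d ≠ 0 := by
    intro h0
    rw [h0] at h
    rw [legSym] at h
    simp [legendreSym.eq_zero_iff] at h
  have : IsSquare d := by
    have := (legendreSym.eq_one_iff p (a := (d.val : ℤ)) (by rw [legSym_cast]; exact hd)).mp h
    rwa [legSym_cast] at this
  obtain ⟨w, hw⟩ := this
  exact ⟨w, fun h0 => hd (by rw [hw, h0, mul_zero]), by rw [hw]; ring⟩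

end

section
variable {F : Type*} [Field F]
lemma half_eq_zero (h2 : (2:F) ≠ 0) {a : F} (h : 2 * a = 0) : a = 0 := by
  rcases mul_eq_zero.mp h with h' | h'
  exacts [absurd h' h2, h']
end

set_option maxHeartbeats 1600000 in
theorem pi_two_y_apDestroying (p : ℕ) [Fact p.Prime] (hp2 : p ≠ 2) (hp3 : p ≠ 3)
    (t : ZMod p)
    (ht : t ∉ ({0, 1, 4, 9} : Set (ZMod p))) (ht4 : 4 * t ≠ 1) (ht9 : 9 * t ≠ 1)
    (htleg1 : legSym p (t * (t - 1)) = -1) (htleg2 : legSym p (1 - t) = -1)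
    (y : ZMod p)
    (hy : y ∉ ({0, 1, -1, 2, 4} : Set (ZMod p)))
    (hy2 : 2 * y ≠ 1) (hy3 : 3 * y ≠ 1) (hty : t * y ≠ 4) (hy2t : (2 * t + 1) * y ≠ 1)
    (hyleg1 : legSym p (1 - t * y) = -1) (hyleg2 : legSym p (1 - y) = -1)
    (hyleg3 : legSym p ((4 * t - 1) ^ 2 * y ^ 2 - 2 * (4 * t + 1) * y + 1) = -1)
    (hyleg4 : legSym p (1 - 9 * y) = 1)
    (π : Equiv.Perm (ZMod 2 × ZMod p))
    (hπ0 : ∀ x : ZMod p, π (0, x) =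
      if x = 0 then ((1 : ZMod 2), t)
      else if x = 1 then (0, y⁻¹)
      else if x = y then (1, 0)
      else (0, x⁻¹))
    (hπ1 : ∀ x : ZMod p, π (1, x) =
      if x = 0 then ((0 : ZMod 2), 1)
      else if x = 1 then (0, 0)
      else (1, t * x⁻¹)) :
    APDestroying π := by
  intro a r hr hC
  obtain ⟨e, x⟩ := a
  obtain ⟨ε, s⟩ := r
  simp only [Set.mem_insert_iff, Set.mem_singleton_iff, not_or] at ht hy
  obtain ⟨ht0, ht1, ht4v, ht9v⟩ := ht
  obtain ⟨hy0, hy1, hym1, hy2v, hy4v⟩ := hy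
  have hp : p.Prime := Fact.out
  have hsm : ∀ u : ZMod 2, 2 • u = 0 := by decide
  have h2p : (2 : ZMod p) ≠ 0 := by
    have : ((2 : ℕ) : ZMod p) ≠ 0 := by
      rw [Ne, ZMod.natCast_eq_zero_iff]
      exact fun h => hp2 ((Nat.prime_dvd_prime_iff_eq hp Nat.prime_two).mp h)
    simpa using this
  have h3p : (3 : ZMod p) ≠ 0 := by
    have : ((3 : ℕ) : ZMod p) ≠ 0 := by
      rw [Ne, ZMod.natCast_eq_zero_iff]
      exact fun h => hp3 ((Nat.prime_dvd_prime_iff_eq hp Nat.prime_three).mp h)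
    simpa using this
  have nsq1 := notSq_of_legSym_neg htleg1
  have nsq2 := notSq_of_legSym_neg htleg2
  have nsqy1 := notSq_of_legSym_neg hyleg1
  have nsqy2 := notSq_of_legSym_neg hyleg2
  have nsqy3 := notSq_of_legSym_neg hyleg3
  obtain ⟨w, hw0, hww⟩ := exists_sqrt hyleg4
  rcases (by decide : ∀ u : ZMod 2, u = 0 ∨ u = 1) ε with hε | hε <;> subst hε
  · -- ε = 0
    have hs : s ≠ 0 := fun h => hr (by simp [h, Prod.ext_iff])
    have h1 : (e, x) + ((0:ZMod 2), s) = (e, x + s) := by simp [Prod.ext_iff]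
    have h2 : (e, x) + 2 • ((0:ZMod 2), s) = (e, x + 2*s) := by
      simp [Prod.ext_iff, two_mul, two_smul]
    rw [h1, h2] at hC
    have hC1 := congrArg Prod.fst hC
    have hC2 := congrArg Prod.snd hC
    simp only [Prod.fst_add, Prod.fst_sub, Prod.smul_fst, Prod.fst_zero, hsm, sub_zero] at hC1
    simp only [Prod.snd_add, Prod.snd_sub, Prod.smul_snd, Prod.snd_zero] at hC2
    simp only [nsmul_eq_mul, Nat.cast_ofNat] at hC2
    clear hC
    rcases (by decide : ∀ u : ZMod 2, u = 0 ∨ u = 1) e with he | he <;> subst he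
    · -- config A0
      by_cases hx0 : x = 0
      · have E1 : π (0, x) = (1, t) := by rw [hπ0 x, if_pos hx0]
        by_cases hz0 : x + 2*s = 0
        · exact hs (half_eq_zero h2p (by linear_combination hz0 - hx0))
        · by_cases hzy : x + 2*s = y
          · -- leaf: t*y = 4
            have hz1 : x + 2*s ≠ 1 := fun h => hy1 (by linear_combination h - hzy)
            have hm0 : x + s ≠ 0 := fun h => hs (by linear_combination h - hx0)
            have hm1 : x + s ≠ 1 := fun h => hy2v (by linear_combination 2*h - hzy - hx0)
            have hmy : x + s ≠ y := fun h => hs (by linear_combination hzy - h)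
            have E2 : π (0, x+s) = (0, (x+s)⁻¹) := by
              rw [hπ0 (x+s), if_neg hm0, if_neg hm1, if_neg hmy]
            have E3 : π (0, x+2*s) = (1, 0) := by
              rw [hπ0 (x+2*s), if_neg hz0, if_neg hz1, if_pos hzy]
            rw [E1, E2, E3] at hC2
            dsimp only at hC2
            apply hty
            field_simp [hm0] at hC2
            linear_combination 2*hC2 - t*hx0 - t*hzy
          · -- prune
            have G3 : (π (0, x+2*s)).1 = 0 := by
              rw [hπ0 (x+2*s)]
              split_ifs <;> rfl
            rw [E1, G3] at hC1
            dsimp only at hC1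
            revert hC1; decide
      · by_cases hx1 : x = 1
        · have E1 : π (0, x) = (0, y⁻¹) := by rw [hπ0 x, if_neg hx0, if_pos hx1]
          by_cases hz0 : x + 2*s = 0
          · have E3 : π (0, x+2*s) = (1, t) := by rw [hπ0 (x+2*s), if_pos hz0]
            rw [E1, E3] at hC1
            dsimp only at hC1
            revert hC1; decide
          · by_cases hz1 : x + 2*s = 1
            · exact hs (half_eq_zero h2p (by linear_combination hz1 - hx1))
            · by_cases hzy : x + 2*s = y
              · have E3 : π (0, x+2*s) = (1, 0) := by
                  rw [hπ0 (x+2*s), if_neg hz0, if_neg hz1, if_pos hzy]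
                rw [E1, E3] at hC1
                dsimp only at hC1
                revert hC1; decide
              · have E3 : π (0, x+2*s) = (0, (x+2*s)⁻¹) := by
                  rw [hπ0 (x+2*s), if_neg hz0, if_neg hz1, if_neg hzy]
                by_cases hm0 : x + s = 0
                · have E2 : π (0, x+s) = (1, t) := by rw [hπ0 (x+s), if_pos hm0]
                  rw [E1, E2, E3] at hC2
                  dsimp only at hC2
                  apply hy2t
                  field_simp [hy0, hz0] at hC2
                  linear_combination hC2 + (2*t*y - 1)*(2*hm0 - hx1)
                · by_cases hm1 : x + s = 1
                  · exact hs (by linear_combination hm1 - hx1)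
                  · by_cases hmy : x + s = y
                    · have E2 : π (0, x+s) = (1, 0) := by
                        rw [hπ0 (x+s), if_neg hm0, if_neg hm1, if_pos hmy]
                      rw [E1, E2, E3] at hC2
                      dsimp only at hC2
                      apply hy3
                      field_simp [hy0, hz0] at hC2
                      linear_combination hC2 - 2*hmy + hx1
                    · have E2 : π (0, x+s) = (0, (x+s)⁻¹) := by
                        rw [hπ0 (x+s), if_neg hm0, if_neg hm1, if_neg hmy]
                      rw [E1, E2, E3] at hC2
                      dsimp only at hC2
                      apply nsqy2 ((2*(x + 2*s) + 1 - 3*y) * w⁻¹)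
                      field_simp [hy0, hm0, hz0] at hC2
                      field_simp [hw0]
                      linear_combination -(1-y)*hww + 8*hC2 - 4*((x+2*s)+y)*hx1
        · by_cases hxy : x = y
          · have E1 : π (0, x) = (1, 0) := by rw [hπ0 x, if_neg hx0, if_neg hx1, if_pos hxy]
            by_cases hz0 : x + 2*s = 0
            · -- leaf: t*y = 4 (mirror)
              have hm0 : x + s ≠ 0 := fun h => hy0 (by linear_combination 2*h - hz0 - hxy)
              have hm1 : x + s ≠ 1 := fun h => hy2v (by linear_combination 2*h - hz0 - hxy)
              have hmy : x + s ≠ y := fun h => hy0 (by linear_combination hz0 - 2*h + hxy)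
              have E2 : π (0, x+s) = (0, (x+s)⁻¹) := by
                rw [hπ0 (x+s), if_neg hm0, if_neg hm1, if_neg hmy]
              have E3 : π (0, x+2*s) = (1, t) := by rw [hπ0 (x+2*s), if_pos hz0]
              rw [E1, E2, E3] at hC2
              dsimp only at hC2
              apply hty
              field_simp [hm0] at hC2
              linear_combination 2*hC2 - t*hz0 - t*hxy
            · by_cases hzy : x + 2*s = y
              · exact hs (half_eq_zero h2p (by linear_combination hzy - hxy))
              · have G3 : (π (0, x+2*s)).1 = 0 := by
                  rw [hπ0 (x+2*s)]
                  split_ifs <;> rfl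
                rw [E1, G3] at hC1
                dsimp only at hC1
                revert hC1; decide
          · have E1 : π (0, x) = (0, x⁻¹) := by rw [hπ0 x, if_neg hx0, if_neg hx1, if_neg hxy]
            by_cases hz0 : x + 2*s = 0
            · have E3 : π (0, x+2*s) = (1, t) := by rw [hπ0 (x+2*s), if_pos hz0]
              rw [E1, E3] at hC1
              dsimp only at hC1
              revert hC1; decide
            · by_cases hzy : x + 2*s = y
              · have E3 : π (0, x+2*s) = (1, 0) := by
                  rw [hπ0 (x+2*s), if_neg hz0, if_neg (fun h => hy1 (by linear_combination h - hzy)), if_pos hzy]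
                rw [E1, E3] at hC1
                dsimp only at hC1
                revert hC1; decide
              · by_cases hz1 : x + 2*s = 1
                · -- branch (gen, 1)
                  have E3 : π (0, x+2*s) = (0, y⁻¹) := by
                    rw [hπ0 (x+2*s), if_neg hz0, if_pos hz1]
                  by_cases hm0 : x + s = 0
                  · have E2 : π (0, x+s) = (1, t) := by rw [hπ0 (x+s), if_pos hm0]
                    rw [E1, E2, E3] at hC2
                    dsimp only at hC2
                    apply hy2t
                    field_simp [hx0, hy0] at hC2
                    linear_combination hC2 + (2*t*y - 1)*(2*hm0 - hz1)
                  · by_cases hm1 : x + s = 1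
                    · exact hs (by linear_combination hz1 - hm1)
                    · by_cases hmy : x + s = y
                      · have E2 : π (0, x+s) = (1, 0) := by
                          rw [hπ0 (x+s), if_neg hm0, if_neg hm1, if_pos hmy]
                        rw [E1, E2, E3] at hC2
                        dsimp only at hC2
                        apply hy3
                        field_simp [hx0, hy0] at hC2
                        linear_combination hC2 - 2*hmy + hz1
                      · have E2 : π (0, x+s) = (0, (x+s)⁻¹) := by
                          rw [hπ0 (x+s), if_neg hm0, if_neg hm1, if_neg hmy]
                        rw [E1, E2, E3] at hC2
                        dsimp only at hC2
                        apply nsqy2 ((2*x + 1 - 3*y) * w⁻¹)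
                        field_simp [hx0, hy0, hm0] at hC2
                        field_simp [hw0]
                        linear_combination -(1-y)*hww + 8*hC2 - 4*(x+y)*hz1
                · -- branch (gen, gen)
                  have E3 : π (0, x+2*s) = (0, (x+2*s)⁻¹) := by
                    rw [hπ0 (x+2*s), if_neg hz0, if_neg hz1, if_neg hzy]
                  by_cases hm0 : x + s = 0
                  · have E2 : π (0, x+s) = (1, t) := by rw [hπ0 (x+s), if_pos hm0]
                    rw [E1, E2, E3] at hC2
                    dsimp only at hC2
                    field_simp [hx0, hz0] at hC2
                    have h' := half_eq_zero h2p (show (2:ZMod p) * (t * x^2) = 0 by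
                      linear_combination hC2 + (4*t*x - 2)*hm0)
                    rcases mul_eq_zero.mp h' with h'' | h''
                    exacts [ht0 h'', hx0 (sq_eq_zero_iff.mp h'')]
                  · by_cases hm1 : x + s = 1
                    · have E2 : π (0, x+s) = (0, y⁻¹) := by
                        rw [hπ0 (x+s), if_neg hm0, if_pos hm1]
                      rw [E1, E2, E3] at hC2
                      dsimp only at hC2
                      apply nsqy2 ((x - (x + 2*s)) * (2:ZMod p)⁻¹)
                      field_simp [hx0, hy0, hz0] at hC2
                      field_simp [h2p]
                      linear_combination 2*hC2 + 4*(x+s+1-y)*hm1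
                    · by_cases hmy : x + s = y
                      · have E2 : π (0, x+s) = (1, 0) := by
                          rw [hπ0 (x+s), if_neg hm0, if_neg hm1, if_pos hmy]
                        rw [E1, E2, E3] at hC2
                        dsimp only at hC2
                        field_simp [hx0, hz0] at hC2
                        have hk : x + s = 0 :=
                          half_eq_zero h2p (show (2:ZMod p) * (x+s) = 0 by linear_combination hC2)
                        exact hy0 (by linear_combination hk - hmy)
                      · have E2 : π (0, x+s) = (0, (x+s)⁻¹) := by
                          rw [hπ0 (x+s), if_neg hm0, if_neg hm1, if_neg hmy]
                        rw [E1, E2, E3] at hC2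
                        dsimp only at hC2
                        field_simp [hx0, hm0, hz0] at hC2
                        exact hs (sq_eq_zero_iff.mp (half_eq_zero h2p
                          (show (2:ZMod p) * s^2 = 0 by linear_combination hC2)))
    · -- config A1
      by_cases hx0 : x = 0
      · have E1 : π (1, x) = (0, 1) := by rw [hπ1 x, if_pos hx0]
        by_cases hz0 : x + 2*s = 0
        · exact hs (half_eq_zero h2p (by linear_combination hz0 - hx0))
        · by_cases hz1 : x + 2*s = 1
          · -- leaf 4t = 1
            have hm0 : x + s ≠ 0 := fun h => hs (by linear_combination h - hx0)
            have hm1 : x + s ≠ 1 := fun h => hs (by linear_combination hz1 - h)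
            have E2 : π (1, x+s) = (1, t * (x+s)⁻¹) := by
              rw [hπ1 (x+s), if_neg hm0, if_neg hm1]
            have E3 : π (1, x+2*s) = (0, 0) := by rw [hπ1 (x+2*s), if_neg hz0, if_pos hz1]
            rw [E1, E2, E3] at hC2
            dsimp only at hC2
            apply ht4
            field_simp [hm0] at hC2
            linear_combination -2*hC2 + hx0 + hz1
          · have E3 : π (1, x+2*s) = (1, t * (x+2*s)⁻¹) := by
              rw [hπ1 (x+2*s), if_neg hz0, if_neg hz1]
            rw [E1, E3] at hC1
            dsimp only at hC1
            revert hC1; decide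
      · by_cases hx1 : x = 1
        · have E1 : π (1, x) = (0, 0) := by rw [hπ1 x, if_neg hx0, if_pos hx1]
          by_cases hz0 : x + 2*s = 0
          · -- leaf 4t = 1 (mirror)
            have hm0 : x + s ≠ 0 := fun h => one_ne_zero (α := ZMod p) (by linear_combination -hx1 + 2*h - hz0)
            have hm1 : x + s ≠ 1 := fun h => hs (by linear_combination h - hx1)
            have E2 : π (1, x+s) = (1, t * (x+s)⁻¹) := by
              rw [hπ1 (x+s), if_neg hm0, if_neg hm1]
            have E3 : π (1, x+2*s) = (0, 1) := by rw [hπ1 (x+2*s), if_pos hz0]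
            rw [E1, E2, E3] at hC2
            dsimp only at hC2
            apply ht4
            field_simp [hm0] at hC2
            linear_combination -2*hC2 + hx1 + hz0
          · by_cases hz1 : x + 2*s = 1
            · exact hs (half_eq_zero h2p (by linear_combination hz1 - hx1))
            · have E3 : π (1, x+2*s) = (1, t * (x+2*s)⁻¹) := by
                rw [hπ1 (x+2*s), if_neg hz0, if_neg hz1]
              rw [E1, E3] at hC1
              dsimp only at hC1
              revert hC1; decide
        · have E1 : π (1, x) = (1, t * x⁻¹) := by rw [hπ1 x, if_neg hx0, if_neg hx1]
          by_cases hz0 : x + 2*s = 0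
          · have E3 : π (1, x+2*s) = (0, 1) := by rw [hπ1 (x+2*s), if_pos hz0]
            rw [E1, E3] at hC1
            dsimp only at hC1
            revert hC1; decide
          · by_cases hz1 : x + 2*s = 1
            · have E3 : π (1, x+2*s) = (0, 0) := by rw [hπ1 (x+2*s), if_neg hz0, if_pos hz1]
              rw [E1, E3] at hC1
              dsimp only at hC1
              revert hC1; decide
            · have E3 : π (1, x+2*s) = (1, t * (x+2*s)⁻¹) := by
                rw [hπ1 (x+2*s), if_neg hz0, if_neg hz1]
              by_cases hm0 : x + s = 0
              · have E2 : π (1, x+s) = (0, 1) := by rw [hπ1 (x+s), if_pos hm0]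
                rw [E1, E2, E3] at hC2
                dsimp only at hC2
                field_simp [hx0, hz0] at hC2
                have h2x : (2:ZMod p) * x^2 = 0 := by linear_combination hC2 + (4*x - 2*t)*hm0
                exact hx0 (sq_eq_zero_iff.mp (half_eq_zero h2p h2x))
              · by_cases hm1 : x + s = 1
                · have E2 : π (1, x+s) = (0, 0) := by
                    rw [hπ1 (x+s), if_neg hm0, if_pos hm1]
                  rw [E1, E2, E3] at hC2
                  dsimp only at hC2
                  field_simp [hx0, hz0] at hC2
                  exact ht0 (half_eq_zero h2p
                    (show (2:ZMod p) * t = 0 by linear_combination hC2 - 2*t*hm1))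
                · have E2 : π (1, x+s) = (1, t * (x+s)⁻¹) := by
                    rw [hπ1 (x+s), if_neg hm0, if_neg hm1]
                  rw [E1, E2, E3] at hC2
                  dsimp only at hC2
                  field_simp [hx0, hm0, hz0] at hC2
                  have h' := half_eq_zero h2p (show (2:ZMod p) * (t * s^2) = 0 by linear_combination hC2)
                  rcases mul_eq_zero.mp h' with h'' | h''
                  exacts [ht0 h'', hs (sq_eq_zero_iff.mp h'')]
  · -- ε = 1
    have h1 : (e, x) + ((1:ZMod 2), s) = (e+1, x + s) := by simp [Prod.ext_iff]
    have h2 : (e, x) + 2 • ((1:ZMod 2), s) = (e, x + 2*s) := by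
      refine Prod.ext ?_ ?_ <;> simp [two_smul, two_mul]
      decide
    rw [h1, h2] at hC
    have hC1 := congrArg Prod.fst hC
    have hC2 := congrArg Prod.snd hC
    simp only [Prod.fst_add, Prod.fst_sub, Prod.smul_fst, Prod.fst_zero, hsm, sub_zero] at hC1
    simp only [Prod.snd_add, Prod.snd_sub, Prod.smul_snd, Prod.snd_zero] at hC2
    simp only [nsmul_eq_mul, Nat.cast_ofNat] at hC2
    clear hC
    rcases (by decide : ∀ u : ZMod 2, u = 0 ∨ u = 1) e with he | he <;> subst he
    · -- config B0 : middle fiber 1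
      have hmid : ((0:ZMod 2)+1) = 1 := by decide
      rw [hmid] at hC2
      by_cases hx0 : x = 0
      · have E1 : π (0, x) = (1, t) := by rw [hπ0 x, if_pos hx0]
        by_cases hz0 : x + 2*s = 0
        · -- leaf t = 1
          have hs0 : s = 0 := half_eq_zero h2p (by linear_combination hz0 - hx0)
          have hm0 : x + s = 0 := by linear_combination hx0 + hs0
          have E2 : π (1, x+s) = (0, 1) := by rw [hπ1 (x+s), if_pos hm0]
          have E3 : π (0, x+2*s) = (1, t) := by rw [hπ0 (x+2*s), if_pos hz0]
          rw [E1, E2, E3] at hC2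
          dsimp only at hC2
          have hk : t - 1 = 0 :=
            half_eq_zero h2p (show (2:ZMod p) * (t - 1) = 0 by linear_combination hC2)
          exact ht1 (by linear_combination hk)
        · by_cases hzy : x + 2*s = y
          · -- leaf t(y-4) = 0
            have hz1 : x + 2*s ≠ 1 := fun h => hy1 (by linear_combination h - hzy)
            have hm0 : x + s ≠ 0 := fun h => hy0 (by linear_combination 2*h - hzy - hx0)
            have hm1 : x + s ≠ 1 := fun h => hy2v (by linear_combination 2*h - hzy - hx0)
            have E2 : π (1, x+s) = (1, t * (x+s)⁻¹) := by
              rw [hπ1 (x+s), if_neg hm0, if_neg hm1]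
            have E3 : π (0, x+2*s) = (1, 0) := by
              rw [hπ0 (x+2*s), if_neg hz0, if_neg hz1, if_pos hzy]
            rw [E1, E2, E3] at hC2
            dsimp only at hC2
            field_simp [hm0] at hC2
            have key : t * (y - 4) = 0 := by linear_combination 2*hC2 - t*hx0 - t*hzy
            rcases mul_eq_zero.mp key with h | h
            exacts [ht0 h, hy4v (by linear_combination h)]
          · have G3 : (π (0, x+2*s)).1 = 0 := by
              rw [hπ0 (x+2*s)]
              split_ifs <;> rfl
            rw [E1, G3] at hC1
            dsimp only at hC1
            revert hC1; decide
      · by_cases hx1 : x = 1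
        · have E1 : π (0, x) = (0, y⁻¹) := by rw [hπ0 x, if_neg hx0, if_pos hx1]
          by_cases hz0 : x + 2*s = 0
          · have E3 : π (0, x+2*s) = (1, t) := by rw [hπ0 (x+2*s), if_pos hz0]
            rw [E1, E3] at hC1
            dsimp only at hC1
            revert hC1; decide
          · by_cases hz1 : x + 2*s = 1
            · -- leaf 2/y = 0
              have hs0 : s = 0 := half_eq_zero h2p (by linear_combination hz1 - hx1)
              have hm1 : x + s = 1 := by linear_combination hx1 + hs0
              have hm0 : x + s ≠ 0 := fun h => one_ne_zero (α := ZMod p) (by linear_combination h - hm1)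
              have E2 : π (1, x+s) = (0, 0) := by rw [hπ1 (x+s), if_neg hm0, if_pos hm1]
              have E3 : π (0, x+2*s) = (0, y⁻¹) := by rw [hπ0 (x+2*s), if_neg hz0, if_pos hz1]
              rw [E1, E2, E3] at hC2
              dsimp only at hC2
              have hk : y⁻¹ = 0 := half_eq_zero h2p (by linear_combination hC2)
              exact hy0 (inv_eq_zero.mp hk)
            · by_cases hzy : x + 2*s = y
              · have E3 : π (0, x+2*s) = (1, 0) := by
                  rw [hπ0 (x+2*s), if_neg hz0, if_neg hz1, if_pos hzy]
                rw [E1, E3] at hC1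
                dsimp only at hC1
                revert hC1; decide
              · have E3 : π (0, x+2*s) = (0, (x+2*s)⁻¹) := by
                  rw [hπ0 (x+2*s), if_neg hz0, if_neg hz1, if_neg hzy]
                by_cases hm0 : x + s = 0
                · have E2 : π (1, x+s) = (0, 1) := by rw [hπ1 (x+s), if_pos hm0]
                  rw [E1, E2, E3] at hC2
                  dsimp only at hC2
                  apply hy3
                  field_simp [hy0, hz0] at hC2
                  linear_combination hC2 - (1 - 2*y)*(2*hm0 - hx1)
                · by_cases hm1 : x + s = 1
                  · exact hz1 (by linear_combination 2*hm1 - hx1)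
                  · have E2 : π (1, x+s) = (1, t * (x+s)⁻¹) := by
                      rw [hπ1 (x+s), if_neg hm0, if_neg hm1]
                    rw [E1, E2, E3] at hC2
                    dsimp only at hC2
                    apply nsqy3 (2*(x + 2*s) + 1 + y - 4*t*y)
                    field_simp [hy0, hm0, hz0] at hC2
                    linear_combination 8*hC2 - 4*((x + 2*s) + y)*hx1
        · by_cases hxy : x = y
          · have E1 : π (0, x) = (1, 0) := by rw [hπ0 x, if_neg hx0, if_neg hx1, if_pos hxy]
            by_cases hz0 : x + 2*s = 0
            · -- leaf t(y-4) = 0 (mirror)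
              have hm0 : x + s ≠ 0 := fun h => hy0 (by linear_combination 2*h - hz0 - hxy)
              have hm1 : x + s ≠ 1 := fun h => hy2v (by linear_combination 2*h - hz0 - hxy)
              have E2 : π (1, x+s) = (1, t * (x+s)⁻¹) := by
                rw [hπ1 (x+s), if_neg hm0, if_neg hm1]
              have E3 : π (0, x+2*s) = (1, t) := by rw [hπ0 (x+2*s), if_pos hz0]
              rw [E1, E2, E3] at hC2
              dsimp only at hC2
              field_simp [hm0] at hC2
              have key : t * (y - 4) = 0 := by linear_combination 2*hC2 - t*hz0 - t*hxy
              rcases mul_eq_zero.mp key with h | h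
              exacts [ht0 h, hy4v (by linear_combination h)]
            · by_cases hzy : x + 2*s = y
              · -- leaf t = 0
                have hs0 : s = 0 := half_eq_zero h2p (by linear_combination hzy - hxy)
                have hm0 : x + s ≠ 0 := fun h => hy0 (by linear_combination h - hxy - hs0)
                have hm1 : x + s ≠ 1 := fun h => hy1 (by linear_combination h - hxy - hs0)
                have E2 : π (1, x+s) = (1, t * (x+s)⁻¹) := by
                  rw [hπ1 (x+s), if_neg hm0, if_neg hm1]
                have E3 : π (0, x+2*s) = (1, 0) := by
                  rw [hπ0 (x+2*s), if_neg (fun h => hy0 (by linear_combination h - hzy)),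
                    if_neg (fun h => hy1 (by linear_combination h - hzy)), if_pos hzy]
                rw [E1, E2, E3] at hC2
                dsimp only at hC2
                field_simp [hm0] at hC2
                exact ht0 (half_eq_zero h2p (by linear_combination -hC2))
              · have G3 : (π (0, x+2*s)).1 = 0 := by
                  rw [hπ0 (x+2*s)]
                  split_ifs <;> rfl
                rw [E1, G3] at hC1
                dsimp only at hC1
                revert hC1; decide
          · have E1 : π (0, x) = (0, x⁻¹) := by rw [hπ0 x, if_neg hx0, if_neg hx1, if_neg hxy]
            by_cases hz0 : x + 2*s = 0
            · have E3 : π (0, x+2*s) = (1, t) := by rw [hπ0 (x+2*s), if_pos hz0]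
              rw [E1, E3] at hC1
              dsimp only at hC1
              revert hC1; decide
            · by_cases hzy : x + 2*s = y
              · have E3 : π (0, x+2*s) = (1, 0) := by
                  rw [hπ0 (x+2*s), if_neg hz0, if_neg (fun h => hy1 (by linear_combination h - hzy)), if_pos hzy]
                rw [E1, E3] at hC1
                dsimp only at hC1
                revert hC1; decide
              · by_cases hz1 : x + 2*s = 1
                · -- branch (gen, 1)
                  have E3 : π (0, x+2*s) = (0, y⁻¹) := by
                    rw [hπ0 (x+2*s), if_neg hz0, if_pos hz1]
                  by_cases hm0 : x + s = 0
                  · have E2 : π (1, x+s) = (0, 1) := by rw [hπ1 (x+s), if_pos hm0]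
                    rw [E1, E2, E3] at hC2
                    dsimp only at hC2
                    apply hy3
                    field_simp [hx0, hy0] at hC2
                    linear_combination hC2 - (1 - 2*y)*(2*hm0 - hz1)
                  · by_cases hm1 : x + s = 1
                    · exact hx1 (by linear_combination 2*hm1 - hz1)
                    · have E2 : π (1, x+s) = (1, t * (x+s)⁻¹) := by
                        rw [hπ1 (x+s), if_neg hm0, if_neg hm1]
                      rw [E1, E2, E3] at hC2
                      dsimp only at hC2
                      apply nsqy3 (2*x + 1 + y - 4*t*y)
                      field_simp [hx0, hy0, hm0] at hC2
                      linear_combination 8*hC2 - 4*(x + y)*hz1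
                · -- branch (gen, gen)
                  have E3 : π (0, x+2*s) = (0, (x+2*s)⁻¹) := by
                    rw [hπ0 (x+2*s), if_neg hz0, if_neg hz1, if_neg hzy]
                  by_cases hm0 : x + s = 0
                  · have E2 : π (1, x+s) = (0, 1) := by rw [hπ1 (x+s), if_pos hm0]
                    rw [E1, E2, E3] at hC2
                    dsimp only at hC2
                    field_simp [hx0, hz0] at hC2
                    have h2x : (2:ZMod p) * x^2 = 0 := by linear_combination hC2 + (4*x - 2)*hm0
                    exact hx0 (sq_eq_zero_iff.mp (half_eq_zero h2p h2x))
                  · by_cases hm1 : x + s = 1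
                    · have E2 : π (1, x+s) = (0, 0) := by
                        rw [hπ1 (x+s), if_neg hm0, if_pos hm1]
                      rw [E1, E2, E3] at hC2
                      dsimp only at hC2
                      field_simp [hx0, hz0] at hC2
                      exact h2p (by linear_combination hC2 - 2*hm1)
                    · have E2 : π (1, x+s) = (1, t * (x+s)⁻¹) := by
                        rw [hπ1 (x+s), if_neg hm0, if_neg hm1]
                      rw [E1, E2, E3] at hC2
                      dsimp only at hC2
                      apply nsq1 (t * (x - (x + 2*s)) * (2*(x+s))⁻¹)
                      field_simp [hx0, hm0, hz0] at hC2
                      field_simp [h2p, hm0]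
                      linear_combination 2*hC2
    · -- config B1 : middle fiber 0
      have hmid : ((1:ZMod 2)+1) = 0 := by decide
      rw [hmid] at hC2
      by_cases hx0 : x = 0
      · have E1 : π (1, x) = (0, 1) := by rw [hπ1 x, if_pos hx0]
        by_cases hz0 : x + 2*s = 0
        · -- leaf t = 1
          have hs0 : s = 0 := half_eq_zero h2p (by linear_combination hz0 - hx0)
          have hm0 : x + s = 0 := by linear_combination hx0 + hs0
          have E2 : π (0, x+s) = (1, t) := by rw [hπ0 (x+s), if_pos hm0]
          have E3 : π (1, x+2*s) = (0, 1) := by rw [hπ1 (x+2*s), if_pos hz0]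
          rw [E1, E2, E3] at hC2
          dsimp only at hC2
          have hk : 1 - t = 0 :=
            half_eq_zero h2p (show (2:ZMod p) * (1 - t) = 0 by linear_combination hC2)
          exact ht1 (by linear_combination -hk)
        · by_cases hz1 : x + 2*s = 1
          · -- leaf 3 = 0
            have hm0 : x + s ≠ 0 := fun h => one_ne_zero (α := ZMod p) (by linear_combination 2*h - hz1 - hx0)
            have hm1 : x + s ≠ 1 := fun h => one_ne_zero (α := ZMod p) (by linear_combination hz1 - 2*h + hx0)
            have hmy : x + s ≠ y := fun h => hy2 (by linear_combination hz1 - 2*h + hx0)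
            have E2 : π (0, x+s) = (0, (x+s)⁻¹) := by
              rw [hπ0 (x+s), if_neg hm0, if_neg hm1, if_neg hmy]
            have E3 : π (1, x+2*s) = (0, 0) := by rw [hπ1 (x+2*s), if_neg hz0, if_pos hz1]
            rw [E1, E2, E3] at hC2
            dsimp only at hC2
            field_simp [hm0] at hC2
            exact h3p (by linear_combination -2*hC2 + hz1 + hx0)
          · have E3 : π (1, x+2*s) = (1, t * (x+2*s)⁻¹) := by
              rw [hπ1 (x+2*s), if_neg hz0, if_neg hz1]
            rw [E1, E3] at hC1
            dsimp only at hC1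
            revert hC1; decide
      · by_cases hx1 : x = 1
        · have E1 : π (1, x) = (0, 0) := by rw [hπ1 x, if_neg hx0, if_pos hx1]
          by_cases hz0 : x + 2*s = 0
          · -- leaf 3 = 0 (mirror)
            have hm0 : x + s ≠ 0 := fun h => one_ne_zero (α := ZMod p) (by linear_combination 2*h - hx1 - hz0)
            have hm1 : x + s ≠ 1 := fun h => one_ne_zero (α := ZMod p) (by linear_combination hx1 + hz0 - 2*h)
            have hmy : x + s ≠ y := fun h => hy2 (by linear_combination hx1 + hz0 - 2*h)
            have E2 : π (0, x+s) = (0, (x+s)⁻¹) := by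
              rw [hπ0 (x+s), if_neg hm0, if_neg hm1, if_neg hmy]
            have E3 : π (1, x+2*s) = (0, 1) := by rw [hπ1 (x+2*s), if_pos hz0]
            rw [E1, E2, E3] at hC2
            dsimp only at hC2
            field_simp [hm0] at hC2
            exact h3p (by linear_combination -2*hC2 + hx1 + hz0)
          · by_cases hz1 : x + 2*s = 1
            · -- leaf 2/y = 0
              have hs0 : s = 0 := half_eq_zero h2p (by linear_combination hz1 - hx1)
              have hm1 : x + s = 1 := by linear_combination hx1 + hs0
              have hm0 : x + s ≠ 0 := fun h => one_ne_zero (α := ZMod p) (by linear_combination h - hm1)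
              have E2 : π (0, x+s) = (0, y⁻¹) := by rw [hπ0 (x+s), if_neg hm0, if_pos hm1]
              have E3 : π (1, x+2*s) = (0, 0) := by rw [hπ1 (x+2*s), if_neg hz0, if_pos hz1]
              rw [E1, E2, E3] at hC2
              dsimp only at hC2
              have hk : y⁻¹ = 0 := half_eq_zero h2p (by linear_combination -hC2)
              exact hy0 (inv_eq_zero.mp hk)
            · have E3 : π (1, x+2*s) = (1, t * (x+2*s)⁻¹) := by
                rw [hπ1 (x+2*s), if_neg hz0, if_neg hz1]
              rw [E1, E3] at hC1
              dsimp only at hC1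
              revert hC1; decide
        · have E1 : π (1, x) = (1, t * x⁻¹) := by rw [hπ1 x, if_neg hx0, if_neg hx1]
          by_cases hz0 : x + 2*s = 0
          · have E3 : π (1, x+2*s) = (0, 1) := by rw [hπ1 (x+2*s), if_pos hz0]
            rw [E1, E3] at hC1
            dsimp only at hC1
            revert hC1; decide
          · by_cases hz1 : x + 2*s = 1
            · have E3 : π (1, x+2*s) = (0, 0) := by rw [hπ1 (x+2*s), if_neg hz0, if_pos hz1]
              rw [E1, E3] at hC1
              dsimp only at hC1
              revert hC1; decide
            · have E3 : π (1, x+2*s) = (1, t * (x+2*s)⁻¹) := by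
                rw [hπ1 (x+2*s), if_neg hz0, if_neg hz1]
              by_cases hm0 : x + s = 0
              · have E2 : π (0, x+s) = (1, t) := by rw [hπ0 (x+s), if_pos hm0]
                rw [E1, E2, E3] at hC2
                dsimp only at hC2
                field_simp [hx0, hz0] at hC2
                have h' := half_eq_zero h2p (show (2:ZMod p) * (t * x^2) = 0 by
                  linear_combination hC2 + (4*t*x - 2*t)*hm0)
                rcases mul_eq_zero.mp h' with h'' | h''
                exacts [ht0 h'', hx0 (sq_eq_zero_iff.mp h'')]
              · by_cases hm1 : x + s = 1
                · have E2 : π (0, x+s) = (0, y⁻¹) := by rw [hπ0 (x+s), if_neg hm0, if_pos hm1]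
                  rw [E1, E2, E3] at hC2
                  dsimp only at hC2
                  apply nsqy1 ((x - (x + 2*s)) * (2:ZMod p)⁻¹)
                  field_simp [hx0, hy0, hz0] at hC2
                  field_simp [h2p]
                  linear_combination 2*hC2 + 4*(x+s+1-t*y)*hm1
                · by_cases hmy : x + s = y
                  · have E2 : π (0, x+s) = (1, 0) := by
                      rw [hπ0 (x+s), if_neg hm0, if_neg hm1, if_pos hmy]
                    rw [E1, E2, E3] at hC2
                    dsimp only at hC2
                    field_simp [hx0, hz0] at hC2
                    have key := half_eq_zero h2p (show (2:ZMod p) * (t * y) = 0 by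
                      linear_combination hC2 - 2*t*hmy)
                    rcases mul_eq_zero.mp key with h | h
                    exacts [ht0 h, hy0 h]
                  · have E2 : π (0, x+s) = (0, (x+s)⁻¹) := by
                      rw [hπ0 (x+s), if_neg hm0, if_neg hm1, if_neg hmy]
                    rw [E1, E2, E3] at hC2
                    dsimp only at hC2
                    apply nsq2 ((x - (x + 2*s)) * (2*(x+s))⁻¹)
                    field_simp [hx0, hm0, hz0] at hC2
                    field_simp [h2p, hm0]
                    linear_combination 2*hC2
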